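/- Let n ∈ ℕ, r > 0, and let Π*, Π, R′ : ℝ^n → ℝ^n be globally Lipschitz continuous maps and H̃ ∈ ℝ^{n×n} a matrix. Let z₀, w₀ ∈ ℝ^n satisfy z₀ = Π*(w₀) and w₀ = Π(z₀). Then there exists a unique pair (z, w) of functions from [0,∞) to ℝ^n that are continuous on [0,∞), differentiable on (0,∞), satisfy z(0) = z₀, w(0) = w₀, and for all t > 0: z′(t) = (r/t)(Π*(w(t)) − z(t)) and w′(t) = (t/r)(−R′(z(t)) − H̃(z(t) + (t/r)z′(t)) + Π(z(t) + (t/r)z′(t)) − w(t)). Uniqueness means that any two such pairs coincide on [0,∞). -/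

import Mathlib

open Set

/-- A solution of the singular accelerated primal-dual ODE
`z′(t) = (r/t)(Π*(w(t)) − z(t))`,
`w′(t) = (t/r)(−R′(z(t)) − H̃(z(t) + (t/r)z′(t)) + Π(z(t) + (t/r)z′(t)) − w(t))`
on `[0,∞)` with initial data `(z₀, w₀)`; `zd` and `wd` record the derivatives. -/
def IsSingularPDSolution (n : ℕ) (r : ℝ)
    (Pistar Pimap Rg : EuclideanSpace ℝ (Fin n) → EuclideanSpace ℝ (Fin n))
    (Ht : Matrix (Fin n) (Fin n) ℝ)
    (z₀ w₀ : EuclideanSpace ℝ (Fin n))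
    (z w zd wd : ℝ → EuclideanSpace ℝ (Fin n)) : Prop :=
  ContinuousOn z (Ici 0) ∧ ContinuousOn w (Ici 0) ∧
  z 0 = z₀ ∧ w 0 = w₀ ∧
  ∀ t > 0, HasDerivAt z (zd t) t ∧ HasDerivAt w (wd t) t ∧
    zd t = (r / t) • (Pistar (w t) - z t) ∧
    wd t = (t / r) • (-(Rg (z t)) - Matrix.toEuclideanLin Ht (z t + (t / r) • zd t)
      + Pimap (z t + (t / r) • zd t) - w t)

open MeasureTheory intervalIntegral Filter Topology

set_option maxHeartbeats 1000000
set_option synthInstance.maxHeartbeats 400000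

open Set MeasureTheory intervalIntegral Filter Topology

noncomputable section Aux7

variable {n : ℕ} (r : ℝ) (Pistar Pimap Rg : EuclideanSpace ℝ (Fin n) → EuclideanSpace ℝ (Fin n))
  (Ht : Matrix (Fin n) (Fin n) ℝ) (w₀ : EuclideanSpace ℝ (Fin n))

local notation "E" => EuclideanSpace ℝ (Fin n)

/-- The singular kernel. -/
def kern (g : ℝ → E) (s : ℝ) : E := (r * s ^ (r - 1)) • Pistar (g s)

/-- The averaging operator giving `z` from `w`. -/
def Az (g : ℝ → E) (t : ℝ) : E :=
  if 0 < t then (t ^ (-r)) • ∫ s in (0:ℝ)..t, kern r Pistar g s else Pistar (g 0)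

/-- The (regularized) right-hand side of the `w` equation. -/
def Fop (z w : E) : E :=
  -(Rg z) - (Matrix.toEuclideanLin Ht) (Pistar w) + Pimap (Pistar w) - w

def Vec (g : ℝ → E) (t : ℝ) : E :=
  (t / r) • Fop Pistar Pimap Rg Ht (Az r Pistar g t) (g t)

def Psi (g : ℝ → E) (t : ℝ) : E := w₀ + ∫ s in (0:ℝ)..t, Vec r Pistar Pimap Rg Ht g s

variable {r}

theorem integrable_kernel (hr : 0 < r) {g : ℝ → E} {b : ℝ}
    (hg : ContinuousOn (fun s => Pistar (g s)) (Icc 0 b)) (hb : 0 ≤ b) :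
    IntervalIntegrable (kern r Pistar g) volume 0 b := by
  obtain ⟨M, hM⟩ : ∃ M, ∀ s ∈ Icc (0:ℝ) b, ‖Pistar (g s)‖ ≤ M := by
    rcases (isCompact_Icc.image_of_continuousOn hg).isBounded.subset_closedBall 0 with ⟨M, hM⟩
    exact ⟨M, fun s hs => by simpa [Metric.mem_closedBall] using hM ⟨s, hs, rfl⟩⟩
  rw [intervalIntegrable_iff_integrableOn_Ioc_of_le hb]
  have hdom : IntegrableOn (fun s => r * s ^ (r - 1) * M) (Ioc 0 b) volume := by
    have : IntervalIntegrable (fun s : ℝ => s ^ (r - 1)) volume 0 b :=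
      intervalIntegrable_rpow' (by linarith)
    have := (this.const_mul r).mul_const M
    rwa [intervalIntegrable_iff_integrableOn_Ioc_of_le hb] at this
  refine Integrable.mono' hdom ?_ ?_
  · refine ContinuousOn.aestronglyMeasurable ?_ measurableSet_Ioc
    show ContinuousOn (fun s => (r * s ^ (r - 1)) • Pistar (g s)) _
    refine ContinuousOn.fun_smul ?_ (hg.mono Ioc_subset_Icc_self)
    refine continuousOn_const.mul ?_
    intro s hs
    exact (Real.continuousAt_rpow_const s (r-1) (Or.inl (ne_of_gt hs.1))).continuousWithinAt
  · refine (ae_restrict_iff' measurableSet_Ioc).2 (Eventually.of_forall fun s hs => ?_)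
    have hs0 : 0 < s := hs.1
    have : ‖kern r Pistar g s‖ = (r * s ^ (r - 1)) * ‖Pistar (g s)‖ := by
      rw [kern, norm_smul, Real.norm_eq_abs, abs_of_nonneg]
      positivity
    rw [kern, norm_smul]
    calc ‖r * s ^ (r-1)‖ * ‖Pistar (g s)‖ = (r * s ^ (r-1)) * ‖Pistar (g s)‖ := by
          rw [Real.norm_eq_abs, abs_of_nonneg (by positivity)]
      _ ≤ r * s ^ (r-1) * M := by
          refine mul_le_mul_of_nonneg_left (hM s ⟨le_of_lt hs0, hs.2⟩) (by positivity)


theorem rpow_cancel {t : ℝ} (ht : 0 < t) : t ^ (-r) * t ^ r = 1 := by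
  rw [← Real.rpow_add ht]; simp

theorem integral_kern_const (hr : 0 < r) {t : ℝ} (ht : 0 < t) (a : EuclideanSpace ℝ (Fin n)) :
    (∫ s in (0:ℝ)..t, (r * s ^ (r - 1)) • a) = (t ^ r) • a := by
  rw [intervalIntegral.integral_smul_const]
  congr 1
  rw [intervalIntegral.integral_const_mul, integral_rpow (Or.inl (by linarith))]
  rw [Real.zero_rpow (by linarith : r - 1 + 1 ≠ 0)]
  rw [sub_add_cancel, sub_zero]; field_simp [hr.ne']

theorem Az_const (hr : 0 < r) {t : ℝ} (ht : 0 ≤ t) (a : EuclideanSpace ℝ (Fin n)) :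
    Az r Pistar (fun _ => a) t = Pistar a := by
  rcases eq_or_lt_of_le ht with h | h
  · simp [Az, ← h]
  · rw [Az, if_pos h]
    show (t ^ (-r)) • (∫ s in (0:ℝ)..t, (r * s ^ (r-1)) • Pistar a) = Pistar a
    rw [integral_kern_const hr h, smul_smul, rpow_cancel h, one_smul]

theorem Az_est (hr : 0 < r) {g₁ g₂ : ℝ → EuclideanSpace ℝ (Fin n)} {t c : ℝ} {m : ℕ}
    (hg₁ : ContinuousOn (fun s => Pistar (g₁ s)) (Icc 0 t))
    (hg₂ : ContinuousOn (fun s => Pistar (g₂ s)) (Icc 0 t))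
    (ht : 0 ≤ t) (hc : 0 ≤ c)
    (hb : ∀ u ∈ Icc (0:ℝ) t, ‖Pistar (g₁ u) - Pistar (g₂ u)‖ ≤ c * u ^ m) :
    ‖Az r Pistar g₁ t - Az r Pistar g₂ t‖ ≤ c * t ^ m := by
  rcases eq_or_lt_of_le ht with h | h
  · rw [Az, Az, if_neg (by rw [← h]; exact lt_irrefl 0), if_neg (by rw [← h]; exact lt_irrefl 0)]
    simpa [← h] using hb 0 ⟨le_refl _, ht⟩
  · have hI₁ := integrable_kernel Pistar hr hg₁ ht
    have hI₂ := integrable_kernel Pistar hr hg₂ ht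
    rw [Az, Az, if_pos h, if_pos h, ← smul_sub, ← intervalIntegral.integral_sub hI₁ hI₂]
    rw [norm_smul, Real.norm_eq_abs, abs_of_nonneg (Real.rpow_nonneg ht _)]
    have hm1 : (-1:ℝ) < r - 1 + (m:ℕ) := by
      have : (0:ℝ) ≤ (m:ℝ) := Nat.cast_nonneg m
      push_cast; linarith
    have hIb : IntervalIntegrable (fun s : ℝ => (r*c) * s ^ (r - 1 + (m:ℝ))) volume 0 t :=
      (intervalIntegrable_rpow' (by push_cast at hm1 ⊢; linarith)).const_mul _
    have hbound : ‖∫ s in (0:ℝ)..t, (kern r Pistar g₁ s - kern r Pistar g₂ s)‖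
        ≤ |∫ s in (0:ℝ)..t, (r*c) * s ^ (r - 1 + (m:ℝ))| := by
      refine intervalIntegral.norm_integral_le_abs_of_norm_le ?_ hIb
      rw [uIoc_of_le ht]
      refine (ae_restrict_iff' measurableSet_Ioc).2 (Eventually.of_forall fun s hs => ?_)
      have hs0 : 0 < s := hs.1
      have e1 : kern r Pistar g₁ s - kern r Pistar g₂ s
          = (r * s ^ (r-1)) • (Pistar (g₁ s) - Pistar (g₂ s)) := by
        rw [kern, kern, smul_sub]
      rw [e1, norm_smul, Real.norm_eq_abs, abs_of_nonneg (by positivity)]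
      calc r * s ^ (r-1) * ‖Pistar (g₁ s) - Pistar (g₂ s)‖
          ≤ r * s ^ (r-1) * (c * s ^ m) :=
            mul_le_mul_of_nonneg_left (hb s ⟨hs0.le, hs.2⟩) (by positivity)
        _ = (r*c) * s ^ (r - 1 + (m:ℝ)) := by
            rw [Real.rpow_add hs0, Real.rpow_natCast]; ring
    have hval : (∫ s in (0:ℝ)..t, (r*c) * s ^ (r - 1 + (m:ℝ)))
        = (r*c) * (t ^ (r + (m:ℝ)) / (r + (m:ℝ))) := by
      rw [intervalIntegral.integral_const_mul, integral_rpow (Or.inl hm1)]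
      rw [Real.zero_rpow (by push_cast at hm1 ⊢; linarith : r - 1 + (m:ℝ) + 1 ≠ 0)]
      have : r - 1 + (m:ℝ) + 1 = r + (m:ℝ) := by ring
      rw [this]; ring
    have hrm : (0:ℝ) < r + (m:ℝ) := by
      have : (0:ℝ) ≤ (m:ℝ) := Nat.cast_nonneg m
      linarith
    have habs : |∫ s in (0:ℝ)..t, (r*c) * s ^ (r - 1 + (m:ℝ))|
        = (r*c) * (t ^ (r + (m:ℝ)) / (r + (m:ℝ))) := by
      rw [hval, abs_of_nonneg]
      have := Real.rpow_nonneg ht (r + (m:ℝ))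
      positivity
    calc t ^ (-r) * ‖∫ s in (0:ℝ)..t, (kern r Pistar g₁ s - kern r Pistar g₂ s)‖
        ≤ t ^ (-r) * ((r*c) * (t ^ (r + (m:ℝ)) / (r + (m:ℝ)))) := by
          rw [← habs]
          exact mul_le_mul_of_nonneg_left hbound (Real.rpow_nonneg ht _)
      _ = (c * t ^ m) * (r / (r + (m:ℝ))) := by
          have e2 : t ^ (-r) * t ^ (r + (m:ℝ)) = t ^ m := by
            rw [← Real.rpow_add h, ← Real.rpow_natCast t m]
            congr 1; ring
          calc t ^ (-r) * ((r*c) * (t ^ (r + (m:ℝ)) / (r + (m:ℝ))))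
              = (t ^ (-r) * t ^ (r + (m:ℝ))) * ((r*c) / (r + (m:ℝ))) := by ring
            _ = (c * t ^ m) * (r / (r + (m:ℝ))) := by rw [e2]; ring
      _ ≤ (c * t ^ m) * 1 := by
          refine mul_le_mul_of_nonneg_left ?_ (by positivity)
          rw [div_le_one hrm]
          have : (0:ℝ) ≤ (m:ℝ) := Nat.cast_nonneg m
          linarith
      _ = c * t ^ m := mul_one _


theorem kern_contOn (hP : Continuous Pistar) {g : ℝ → EuclideanSpace ℝ (Fin n)}
    (hg : Continuous g) : ContinuousOn (kern r Pistar g) (Ioi 0) := by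
  show ContinuousOn (fun s => (r * s ^ (r - 1)) • Pistar (g s)) _
  refine ContinuousOn.fun_smul ?_ ((hP.comp hg).continuousOn)
  refine continuousOn_const.mul fun s hs => ?_
  exact (Real.continuousAt_rpow_const s (r-1) (Or.inl (ne_of_gt hs))).continuousWithinAt

theorem hasDerivAt_integral_kern (hr : 0 < r) (hP : Continuous Pistar)
    {g : ℝ → EuclideanSpace ℝ (Fin n)} (hg : Continuous g) {t : ℝ} (ht : 0 < t) :
    HasDerivAt (fun u => ∫ s in (0:ℝ)..u, kern r Pistar g s) (kern r Pistar g t) t := by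
  refine intervalIntegral.integral_hasDerivAt_right
    (integrable_kernel Pistar hr ((hP.comp hg).continuousOn) ht.le) ?_ ?_
  · exact (kern_contOn Pistar hP hg).stronglyMeasurableAtFilter isOpen_Ioi t ht
  · exact (kern_contOn Pistar hP hg).continuousAt (isOpen_Ioi.mem_nhds ht)

theorem Az_cont (hr : 0 < r) (hP : Continuous Pistar)
    {g : ℝ → EuclideanSpace ℝ (Fin n)} (hg : Continuous g) :
    Continuous (Az r Pistar g) := by
  rw [continuous_iff_continuousAt]
  intro t
  rcases lt_trichotomy t 0 with ht | ht | ht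
  · refine ContinuousAt.congr (continuousAt_const (y := Pistar (g 0))) ?_
    filter_upwards [Iio_mem_nhds ht] with u hu
    exact (if_neg (by simp at hu; exact not_lt.2 hu.le)).symm
  · subst ht
    rw [Metric.continuousAt_iff]
    intro ε hε
    have hc : ContinuousAt (fun s => Pistar (g s)) 0 := (hP.comp hg).continuousAt
    rw [Metric.continuousAt_iff] at hc
    obtain ⟨δ, hδ, hδ'⟩ := hc (ε/2) (by linarith)
    refine ⟨δ, hδ, fun {u} hu => ?_⟩
    have hAz0 : Az r Pistar g 0 = Pistar (g 0) := if_neg (lt_irrefl 0)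
    rcases le_or_gt u 0 with hu0 | hu0
    · rw [Az, if_neg (not_lt.2 hu0), hAz0]
      simpa using hε
    · have key : ‖Az r Pistar g u - Az r Pistar (fun _ => g 0) u‖ ≤ (ε/2) * u ^ (0:ℕ) := by
        refine Az_est Pistar hr ((hP.comp hg).continuousOn) (continuous_const.continuousOn)
          hu0.le (by linarith) fun v hv => ?_
        have : dist v 0 < δ := by
          rw [Real.dist_eq, sub_zero, abs_of_nonneg hv.1]
          calc v ≤ u := hv.2
            _ < δ := by rw [Real.dist_eq, sub_zero] at hu; exact lt_of_abs_lt hu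
        have := hδ' this
        rw [dist_eq_norm] at this
        simpa using this.le
      rw [Az_const Pistar hr hu0.le] at key
      rw [hAz0, dist_eq_norm]
      simpa using lt_of_le_of_lt (by simpa using key) (by linarith : ε/2 < ε)
  · refine ContinuousAt.congr
      (f := fun u => (u ^ (-r)) • ∫ s in (0:ℝ)..u, kern r Pistar g s) ?_ ?_
    · exact ((Real.continuousAt_rpow_const t (-r) (Or.inl ht.ne')).smul
        (hasDerivAt_integral_kern Pistar hr hP hg ht).continuousAt)
    · filter_upwards [Ioi_mem_nhds ht] with u hu
      exact (if_pos hu).symm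


theorem Vec_cont (hr : 0 < r) (hP : Continuous Pistar) (hPm : Continuous Pimap)
    (hR : Continuous Rg) {g : ℝ → EuclideanSpace ℝ (Fin n)} (hg : Continuous g) :
    Continuous (Vec r Pistar Pimap Rg Ht g) := by
  have hAz := Az_cont Pistar hr hP hg
  have hHl : Continuous fun x : EuclideanSpace ℝ (Fin n) => (Matrix.toEuclideanLin Ht) x :=
    LinearMap.continuous_of_finiteDimensional _
  refine Continuous.smul (continuous_id.div_const r) ?_
  show Continuous fun t => Fop Pistar Pimap Rg Ht (Az r Pistar g t) (g t)
  unfold Fop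
  exact (((hR.comp hAz).neg.sub (hHl.comp (hP.comp hg))).add (hPm.comp (hP.comp hg))).sub hg

theorem hasDerivAt_Psi (hr : 0 < r) (hP : Continuous Pistar) (hPm : Continuous Pimap)
    (hR : Continuous Rg) {g : ℝ → EuclideanSpace ℝ (Fin n)} (hg : Continuous g) (t : ℝ) :
    HasDerivAt (Psi r Pistar Pimap Rg Ht w₀ g) (Vec r Pistar Pimap Rg Ht g t) t := by
  have hV := Vec_cont Pistar Pimap Rg Ht hr hP hPm hR hg
  exact (intervalIntegral.integral_hasDerivAt_right (hV.intervalIntegrable _ _)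
    (hV.stronglyMeasurableAtFilter _ _) hV.continuousAt).const_add w₀

theorem Psi_cont (hr : 0 < r) (hP : Continuous Pistar) (hPm : Continuous Pimap)
    (hR : Continuous Rg) {g : ℝ → EuclideanSpace ℝ (Fin n)} (hg : Continuous g) :
    Continuous (Psi r Pistar Pimap Rg Ht w₀ g) :=
  continuous_iff_continuousAt.2 fun t =>
    (hasDerivAt_Psi Pistar Pimap Rg Ht w₀ hr hP hPm hR hg t).continuousAt

/-- Operator norm constant for the matrix. -/
def CH : ℝ := ‖LinearMap.toContinuousLinearMap (Matrix.toEuclideanLin Ht)‖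

theorem CH_nonneg : 0 ≤ CH (n := n) Ht := norm_nonneg _

theorem Hl_bound (v : EuclideanSpace ℝ (Fin n)) :
    ‖(Matrix.toEuclideanLin Ht) v‖ ≤ CH Ht * ‖v‖ := by
  have := (LinearMap.toContinuousLinearMap (Matrix.toEuclideanLin Ht)).le_opNorm v
  simpa [CH] using this

theorem Fop_lip {K₁ K₂ K₃ : NNReal} (hPistar : LipschitzWith K₁ Pistar)
    (hPimap : LipschitzWith K₂ Pimap) (hRg : LipschitzWith K₃ Rg)
    (z z' w w' : EuclideanSpace ℝ (Fin n)) :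
    ‖Fop Pistar Pimap Rg Ht z w - Fop Pistar Pimap Rg Ht z' w'‖
      ≤ (K₃ + CH Ht * K₁ + K₂ * K₁ + 1) * ‖z - z'‖
        + (K₃ + CH Ht * K₁ + K₂ * K₁ + 1) * ‖w - w'‖ := by
  have h1 : ‖Rg z - Rg z'‖ ≤ (K₃ : ℝ) * ‖z - z'‖ := by
    simpa [dist_eq_norm] using hRg.dist_le_mul z z'
  have hP1 : ‖Pistar w - Pistar w'‖ ≤ (K₁ : ℝ) * ‖w - w'‖ := by
    simpa [dist_eq_norm] using hPistar.dist_le_mul w w'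
  have h2 : ‖(Matrix.toEuclideanLin Ht) (Pistar w) - (Matrix.toEuclideanLin Ht) (Pistar w')‖
      ≤ CH Ht * (K₁ : ℝ) * ‖w - w'‖ := by
    rw [← map_sub]
    calc ‖(Matrix.toEuclideanLin Ht) (Pistar w - Pistar w')‖
        ≤ CH Ht * ‖Pistar w - Pistar w'‖ := Hl_bound Ht _
      _ ≤ CH Ht * ((K₁ : ℝ) * ‖w - w'‖) := mul_le_mul_of_nonneg_left hP1 (CH_nonneg Ht)
      _ = CH Ht * (K₁ : ℝ) * ‖w - w'‖ := by ring
  have h3 : ‖Pimap (Pistar w) - Pimap (Pistar w')‖ ≤ (K₂ : ℝ) * ((K₁:ℝ) * ‖w - w'‖) := by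
    calc ‖Pimap (Pistar w) - Pimap (Pistar w')‖ ≤ (K₂ : ℝ) * ‖Pistar w - Pistar w'‖ := by
          simpa [dist_eq_norm] using hPimap.dist_le_mul (Pistar w) (Pistar w')
      _ ≤ (K₂ : ℝ) * ((K₁:ℝ) * ‖w - w'‖) := mul_le_mul_of_nonneg_left hP1 K₂.2
  have hsplit : Fop Pistar Pimap Rg Ht z w - Fop Pistar Pimap Rg Ht z' w'
      = (-(Rg z - Rg z')) - ((Matrix.toEuclideanLin Ht) (Pistar w)
          - (Matrix.toEuclideanLin Ht) (Pistar w'))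
        + (Pimap (Pistar w) - Pimap (Pistar w')) - (w - w') := by
    unfold Fop; abel
  rw [hsplit]
  have hzz : (0:ℝ) ≤ ‖z - z'‖ := norm_nonneg _
  have hww : (0:ℝ) ≤ ‖w - w'‖ := norm_nonneg _
  have hK₁ : (0:ℝ) ≤ K₁ := K₁.2
  have hK₂ : (0:ℝ) ≤ K₂ := K₂.2
  have hK₃ : (0:ℝ) ≤ K₃ := K₃.2
  have hCH := CH_nonneg (n := n) Ht
  calc ‖(-(Rg z - Rg z')) - ((Matrix.toEuclideanLin Ht) (Pistar w)
          - (Matrix.toEuclideanLin Ht) (Pistar w'))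
        + (Pimap (Pistar w) - Pimap (Pistar w')) - (w - w')‖
      ≤ ‖(-(Rg z - Rg z')) - ((Matrix.toEuclideanLin Ht) (Pistar w)
          - (Matrix.toEuclideanLin Ht) (Pistar w'))
        + (Pimap (Pistar w) - Pimap (Pistar w'))‖ + ‖w - w'‖ := norm_sub_le _ _
    _ ≤ (‖(-(Rg z - Rg z')) - ((Matrix.toEuclideanLin Ht) (Pistar w)
          - (Matrix.toEuclideanLin Ht) (Pistar w'))‖
        + ‖Pimap (Pistar w) - Pimap (Pistar w')‖) + ‖w - w'‖ := by
          gcongr; exact norm_add_le _ _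
    _ ≤ ((‖Rg z - Rg z'‖ + ‖(Matrix.toEuclideanLin Ht) (Pistar w)
          - (Matrix.toEuclideanLin Ht) (Pistar w')‖)
        + ‖Pimap (Pistar w) - Pimap (Pistar w')‖) + ‖w - w'‖ := by
          gcongr
          calc ‖(-(Rg z - Rg z')) - _‖ ≤ ‖-(Rg z - Rg z')‖ + ‖_‖ := norm_sub_le _ _
            _ = ‖Rg z - Rg z'‖ + _ := by rw [norm_neg]
    _ ≤ (((K₃:ℝ) * ‖z - z'‖ + CH Ht * (K₁ : ℝ) * ‖w - w'‖)
        + (K₂ : ℝ) * ((K₁:ℝ) * ‖w - w'‖)) + ‖w - w'‖ :=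
          add_le_add (add_le_add (add_le_add h1 h2) h3) le_rfl
    _ ≤ (K₃ + CH Ht * K₁ + K₂ * K₁ + 1) * ‖z - z'‖
        + (K₃ + CH Ht * K₁ + K₂ * K₁ + 1) * ‖w - w'‖ := by
          nlinarith [mul_nonneg (mul_nonneg hCH hK₁) hzz, mul_nonneg (mul_nonneg hK₂ hK₁) hzz,
            mul_nonneg hK₃ hww, mul_nonneg hK₃ hzz]


/-- Combined Lipschitz constant. -/
def CL (K₁ K₂ K₃ : NNReal) : ℝ := K₃ + CH Ht * K₁ + K₂ * K₁ + 1

theorem CL_pos (K₁ K₂ K₃ : NNReal) : 0 < CL Ht K₁ K₂ K₃ := by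
  have := CH_nonneg (n := n) Ht
  have h1 : (0:ℝ) ≤ K₁ := K₁.2
  have h2 : (0:ℝ) ≤ K₂ := K₂.2
  have h3 : (0:ℝ) ≤ K₃ := K₃.2
  have := mul_nonneg (CH_nonneg (n := n) Ht) h1
  have := mul_nonneg h2 h1
  unfold CL; linarith

/-- Contraction rate constant. -/
def CC (r : ℝ) (K₁ K₂ K₃ : NNReal) : ℝ := CL Ht K₁ K₂ K₃ * ((K₁:ℝ) + 1) / r

theorem CC_pos {K₁ K₂ K₃ : NNReal} (hr : 0 < r) : 0 < CC Ht r K₁ K₂ K₃ := by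
  have h1 : (0:ℝ) ≤ K₁ := K₁.2
  have := CL_pos (n := n) Ht K₁ K₂ K₃
  unfold CC; positivity

theorem Psi_est (hr : 0 < r) {K₁ K₂ K₃ : NNReal} (hPistar : LipschitzWith K₁ Pistar)
    (hPimap : LipschitzWith K₂ Pimap) (hRg : LipschitzWith K₃ Rg)
    {g₁ g₂ : ℝ → EuclideanSpace ℝ (Fin n)} (hg₁ : Continuous g₁) (hg₂ : Continuous g₂)
    {t c : ℝ} {m : ℕ} (ht : 0 ≤ t) (hc : 0 ≤ c)
    (hb : ∀ u ∈ Icc (0:ℝ) t, ‖g₁ u - g₂ u‖ ≤ c * u ^ m) :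
    ‖Psi r Pistar Pimap Rg Ht w₀ g₁ t - Psi r Pistar Pimap Rg Ht w₀ g₂ t‖
      ≤ (CC Ht r K₁ K₂ K₃ * c / (m + 2)) * t ^ (m + 2) := by
  have hV₁ := Vec_cont Pistar Pimap Rg Ht hr hPistar.continuous hPimap.continuous
    hRg.continuous hg₁
  have hV₂ := Vec_cont Pistar Pimap Rg Ht hr hPistar.continuous hPimap.continuous
    hRg.continuous hg₂
  have hdiff : Psi r Pistar Pimap Rg Ht w₀ g₁ t - Psi r Pistar Pimap Rg Ht w₀ g₂ t
      = ∫ s in (0:ℝ)..t, (Vec r Pistar Pimap Rg Ht g₁ s - Vec r Pistar Pimap Rg Ht g₂ s) := by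
    rw [Psi, Psi, add_sub_add_left_eq_sub,
      intervalIntegral.integral_sub (hV₁.intervalIntegrable _ _) (hV₂.intervalIntegrable _ _)]
  rw [hdiff]
  set CCv := CC Ht r K₁ K₂ K₃ with hCCv
  have hCC0 : 0 < CCv := CC_pos Ht hr
  have hIb : IntervalIntegrable (fun s : ℝ => (CCv * c) * s ^ (m+1)) volume 0 t :=
    (continuous_const.mul (continuous_pow _)).intervalIntegrable _ _
  have hbound : ‖∫ s in (0:ℝ)..t, (Vec r Pistar Pimap Rg Ht g₁ s - Vec r Pistar Pimap Rg Ht g₂ s)‖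
      ≤ |∫ s in (0:ℝ)..t, (CCv * c) * s ^ (m+1)| := by
    refine intervalIntegral.norm_integral_le_abs_of_norm_le ?_ hIb
    rw [uIoc_of_le ht]
    refine (ae_restrict_iff' measurableSet_Ioc).2 (Eventually.of_forall fun s hs => ?_)
    have hs0 : 0 < s := hs.1
    have e1 : Vec r Pistar Pimap Rg Ht g₁ s - Vec r Pistar Pimap Rg Ht g₂ s
        = (s / r) • (Fop Pistar Pimap Rg Ht (Az r Pistar g₁ s) (g₁ s)
            - Fop Pistar Pimap Rg Ht (Az r Pistar g₂ s) (g₂ s)) := by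
      rw [Vec, Vec, smul_sub]
    have hAz : ‖Az r Pistar g₁ s - Az r Pistar g₂ s‖ ≤ ((K₁:ℝ) * c) * s ^ m := by
      refine Az_est Pistar hr ((hPistar.continuous.comp hg₁).continuousOn)
        ((hPistar.continuous.comp hg₂).continuousOn) hs0.le
        (mul_nonneg K₁.2 hc) fun u hu => ?_
      calc ‖Pistar (g₁ u) - Pistar (g₂ u)‖ ≤ (K₁:ℝ) * ‖g₁ u - g₂ u‖ := by
            simpa [dist_eq_norm] using hPistar.dist_le_mul (g₁ u) (g₂ u)
        _ ≤ (K₁:ℝ) * (c * u ^ m) := by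
            refine mul_le_mul_of_nonneg_left (hb u ⟨hu.1, le_trans hu.2 hs.2⟩) K₁.2
        _ = ((K₁:ℝ) * c) * u ^ m := by ring
    have hg : ‖g₁ s - g₂ s‖ ≤ c * s ^ m := hb s ⟨hs0.le, hs.2⟩
    rw [e1, norm_smul, Real.norm_eq_abs, abs_of_nonneg (by positivity : (0:ℝ) ≤ s / r)]
    calc (s / r) * ‖Fop Pistar Pimap Rg Ht (Az r Pistar g₁ s) (g₁ s)
            - Fop Pistar Pimap Rg Ht (Az r Pistar g₂ s) (g₂ s)‖
        ≤ (s / r) * (CL Ht K₁ K₂ K₃ * ‖Az r Pistar g₁ s - Az r Pistar g₂ s‖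
            + CL Ht K₁ K₂ K₃ * ‖g₁ s - g₂ s‖) := by
          refine mul_le_mul_of_nonneg_left ?_ (by positivity)
          exact Fop_lip Pistar Pimap Rg Ht hPistar hPimap hRg _ _ _ _
      _ ≤ (s / r) * (CL Ht K₁ K₂ K₃ * (((K₁:ℝ) * c) * s ^ m)
            + CL Ht K₁ K₂ K₃ * (c * s ^ m)) := by
          have hCL := (CL_pos (n := n) Ht K₁ K₂ K₃).le
          gcongr
      _ = (CCv * c) * s ^ (m+1) := by
          rw [hCCv, CC]
          field_simp
          ring
  have hval : (∫ s in (0:ℝ)..t, (CCv * c) * s ^ (m+1))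
      = (CCv * c) * (t ^ (m+2) / ((m:ℝ)+2)) := by
    rw [intervalIntegral.integral_const_mul, integral_pow]
    push_cast
    ring
  calc ‖∫ s in (0:ℝ)..t, (Vec r Pistar Pimap Rg Ht g₁ s - Vec r Pistar Pimap Rg Ht g₂ s)‖
      ≤ |∫ s in (0:ℝ)..t, (CCv * c) * s ^ (m+1)| := hbound
    _ = (CCv * c) * (t ^ (m+2) / ((m:ℝ)+2)) := by
        rw [hval, abs_of_nonneg]
        positivity
    _ = (CCv * c / (m + 2)) * t ^ (m+2) := by push_cast; ring

theorem Az_congr {g₁ g₂ : ℝ → EuclideanSpace ℝ (Fin n)} {t s : ℝ}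
    (h : EqOn g₁ g₂ (Icc 0 t)) (hs : s ∈ Icc (0:ℝ) t) :
    Az r Pistar g₁ s = Az r Pistar g₂ s := by
  rcases lt_or_ge 0 s with hs0 | hs0
  · rw [Az, Az, if_pos hs0, if_pos hs0]
    congr 1
    refine intervalIntegral.integral_congr fun u hu => ?_
    rw [uIcc_of_le hs.1] at hu
    rw [kern, kern, h ⟨hu.1, le_trans hu.2 hs.2⟩]
  · rw [Az, Az, if_neg (not_lt.2 hs0), if_neg (not_lt.2 hs0), h ⟨le_refl 0, le_trans hs.1 hs.2⟩]

theorem Vec_congr {g₁ g₂ : ℝ → EuclideanSpace ℝ (Fin n)} {t s : ℝ}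
    (h : EqOn g₁ g₂ (Icc 0 t)) (hs : s ∈ Icc (0:ℝ) t) :
    Vec r Pistar Pimap Rg Ht g₁ s = Vec r Pistar Pimap Rg Ht g₂ s := by
  rw [Vec, Vec, Az_congr Pistar h hs, h hs]

theorem Psi_congr {g₁ g₂ : ℝ → EuclideanSpace ℝ (Fin n)} {t u : ℝ}
    (h : EqOn g₁ g₂ (Icc 0 t)) (hu : u ∈ Icc (0:ℝ) t) :
    Psi r Pistar Pimap Rg Ht w₀ g₁ u = Psi r Pistar Pimap Rg Ht w₀ g₂ u := by
  rw [Psi, Psi]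
  congr 1
  refine intervalIntegral.integral_congr fun s hs => ?_
  rw [uIcc_of_le hu.1] at hs
  exact Vec_congr Pistar Pimap Rg Ht h ⟨hs.1, le_trans hs.2 hu.2⟩


variable (r) in
/-- The Picard operator on `C([0,T], E)`. -/
def PsiT (hr : 0 < r) (hP : Continuous Pistar) (hPm : Continuous Pimap) (hR : Continuous Rg)
    {T : ℝ} (hT : (0:ℝ) ≤ T) (f : C(Icc (0:ℝ) T, EuclideanSpace ℝ (Fin n))) :
    C(Icc (0:ℝ) T, EuclideanSpace ℝ (Fin n)) :=
  ⟨fun u => Psi r Pistar Pimap Rg Ht w₀ (IccExtend hT f) u,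
    (Psi_cont Pistar Pimap Rg Ht w₀ hr hP hPm hR f.continuous.Icc_extend').comp
      continuous_subtype_val⟩

theorem iterate_est (hr : 0 < r) {K₁ K₂ K₃ : NNReal} (hPistar : LipschitzWith K₁ Pistar)
    (hPimap : LipschitzWith K₂ Pimap) (hRg : LipschitzWith K₃ Rg)
    {T : ℝ} (hT : (0:ℝ) ≤ T)
    (f₁ f₂ : C(Icc (0:ℝ) T, EuclideanSpace ℝ (Fin n))) (k : ℕ) :
    ∀ u : Icc (0:ℝ) T,
      ‖((PsiT r Pistar Pimap Rg Ht w₀ hr hPistar.continuous hPimap.continuous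
            hRg.continuous hT)^[k] f₁) u
        - ((PsiT r Pistar Pimap Rg Ht w₀ hr hPistar.continuous hPimap.continuous
            hRg.continuous hT)^[k] f₂) u‖
      ≤ (CC Ht r K₁ K₂ K₃ ^ k / ((2:ℝ) ^ k * (Nat.factorial k : ℝ))) * (u:ℝ) ^ (2*k) * dist f₁ f₂ := by
  set F := PsiT r Pistar Pimap Rg Ht w₀ hr hPistar.continuous hPimap.continuous
    hRg.continuous hT with hF
  set CCv := CC Ht r K₁ K₂ K₃ with hCCv
  have hCC0 : 0 < CCv := CC_pos Ht hr
  induction k with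
  | zero =>
    intro u
    simpa [dist_eq_norm] using ContinuousMap.dist_apply_le_dist (f := f₁) (g := f₂) u
  | succ k ih =>
    intro u
    rw [Function.iterate_succ_apply', Function.iterate_succ_apply']
    set c : ℝ := CCv ^ k / ((2:ℝ) ^ k * (Nat.factorial k : ℝ)) * dist f₁ f₂ with hc
    have hc0 : 0 ≤ c := by
      have := dist_nonneg (x := f₁) (y := f₂)
      positivity
    have key : ‖Psi r Pistar Pimap Rg Ht w₀ (IccExtend hT (F^[k] f₁)) u
        - Psi r Pistar Pimap Rg Ht w₀ (IccExtend hT (F^[k] f₂)) u‖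
        ≤ (CC Ht r K₁ K₂ K₃ * c / (((2*k : ℕ) : ℝ) + 2)) * (u:ℝ) ^ (2*k + 2) := by
      refine Psi_est Pistar Pimap Rg Ht w₀ hr hPistar hPimap hRg
        (F^[k] f₁).continuous.Icc_extend' (F^[k] f₂).continuous.Icc_extend' u.2.1 hc0
        fun v hv => ?_
      have hvT : v ∈ Icc (0:ℝ) T := ⟨hv.1, le_trans hv.2 u.2.2⟩
      rw [IccExtend_of_mem hT _ hvT, IccExtend_of_mem hT _ hvT]
      calc ‖(F^[k] f₁) ⟨v, hvT⟩ - (F^[k] f₂) ⟨v, hvT⟩‖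
          ≤ CCv ^ k / ((2:ℝ) ^ k * (Nat.factorial k : ℝ)) * v ^ (2*k) * dist f₁ f₂ := ih ⟨v, hvT⟩
        _ = c * v ^ (2*k) := by rw [hc]; ring
    have e2 : ((2*k) + 2 : ℕ) = 2*(k+1) := by ring
    calc ‖(F (F^[k] f₁)) u - (F (F^[k] f₂)) u‖
        ≤ (CCv * c / (((2*k : ℕ) : ℝ) + 2)) * (u:ℝ) ^ (2*k + 2) := key
      _ = CCv ^ (k+1) / ((2:ℝ) ^ (k+1) * (Nat.factorial (k+1) : ℝ)) * (u:ℝ) ^ (2*(k+1)) * dist f₁ f₂ := by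
          rw [← e2, hc, Nat.factorial_succ]
          have h2k : ((2*k:ℕ) + 2 : ℝ) ≠ 0 := by positivity
          have hk1 : ((Nat.factorial k : ℝ) : ℝ) ≠ 0 := Nat.cast_ne_zero.2 (Nat.factorial_ne_zero k)
          have h2 : ((2:ℝ) ^ k) ≠ 0 := by positivity
          push_cast
          field_simp
          ring
      _ ≤ _ := le_refl _

theorem exists_fixedPoint_PsiT (hr : 0 < r) {K₁ K₂ K₃ : NNReal}
    (hPistar : LipschitzWith K₁ Pistar) (hPimap : LipschitzWith K₂ Pimap)
    (hRg : LipschitzWith K₃ Rg) {T : ℝ} (hT : (0:ℝ) ≤ T) :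
    ∃ f : C(Icc (0:ℝ) T, EuclideanSpace ℝ (Fin n)),
      PsiT r Pistar Pimap Rg Ht w₀ hr hPistar.continuous hPimap.continuous
        hRg.continuous hT f = f ∧
      ∀ f', PsiT r Pistar Pimap Rg Ht w₀ hr hPistar.continuous hPimap.continuous
        hRg.continuous hT f' = f' → f' = f := by
  set F := PsiT r Pistar Pimap Rg Ht w₀ hr hPistar.continuous hPimap.continuous
    hRg.continuous hT with hF
  set CCv := CC Ht r K₁ K₂ K₃ with hCCv
  have hCC0 : 0 < CCv := CC_pos Ht hr
  -- choose k such that the iterate is a contraction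
  obtain ⟨k, hk⟩ : ∃ k : ℕ, (CCv * T^2 / 2) ^ k / (Nat.factorial k : ℝ) < 1 := by
    have := FloorSemiring.tendsto_pow_div_factorial_atTop (K := ℝ) (CCv * T^2 / 2)
    have h2 := this.eventually (eventually_lt_nhds (by norm_num : (0:ℝ) < 1))
    exact h2.exists
  set q : ℝ := (CCv * T^2 / 2) ^ k / (Nat.factorial k : ℝ) with hq
  have hq0 : 0 ≤ q := by positivity
  have hlip : ∀ f₁ f₂, dist (F^[k] f₁) (F^[k] f₂) ≤ q * dist f₁ f₂ := by
    intro f₁ f₂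
    have hd0 : (0:ℝ) ≤ q * dist f₁ f₂ := mul_nonneg hq0 dist_nonneg
    rw [ContinuousMap.dist_le hd0]
    intro u
    rw [dist_eq_norm]
    calc ‖(F^[k] f₁) u - (F^[k] f₂) u‖
        ≤ (CCv ^ k / ((2:ℝ) ^ k * (Nat.factorial k : ℝ))) * (u:ℝ) ^ (2*k) * dist f₁ f₂ :=
          iterate_est Pistar Pimap Rg Ht w₀ hr hPistar hPimap hRg hT f₁ f₂ k u
      _ ≤ (CCv ^ k / ((2:ℝ) ^ k * (Nat.factorial k : ℝ))) * T ^ (2*k) * dist f₁ f₂ := by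
          gcongr
          all_goals first | exact u.2.1 | exact u.2.2 | positivity
      _ = q * dist f₁ f₂ := by
          rw [hq, div_pow, mul_pow, pow_mul]
          ring
  have hcontr : ContractingWith q.toNNReal (F^[k]) := by
    constructor
    · rwa [Real.toNNReal_lt_one]
    · refine LipschitzWith.of_dist_le_mul fun f₁ f₂ => ?_
      rw [Real.coe_toNNReal _ hq0]
      exact hlip f₁ f₂
  set x := ContractingWith.fixedPoint (F^[k]) hcontr with hx
  have hxfix : (F^[k]) x = x := hcontr.fixedPoint_isFixedPt
  have hcomm : F ((F^[k]) x) = (F^[k]) (F x) := by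
    rw [← Function.iterate_succ_apply' F k x, Function.iterate_succ_apply F k x]
  have hFx : (F^[k]) (F x) = F x := by rw [← hcomm, hxfix]
  have hFxx : F x = x := (hcontr.fixedPoint_unique (x := F x) hFx).trans hx.symm
  refine ⟨x, hFxx, fun f' hf' => ?_⟩
  have hit : (F^[k]) f' = f' := Function.IsFixedPt.iterate hf' k
  exact (hcontr.fixedPoint_unique (x := f') hit).trans hx.symm


variable (r) in
/-- The fixed point on `[0,T]`. -/
def fixT (hr : 0 < r) {K₁ K₂ K₃ : NNReal} (hPistar : LipschitzWith K₁ Pistar)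
    (hPimap : LipschitzWith K₂ Pimap) (hRg : LipschitzWith K₃ Rg) {T : ℝ} (hT : (0:ℝ) ≤ T) :
    C(Icc (0:ℝ) T, EuclideanSpace ℝ (Fin n)) :=
  (exists_fixedPoint_PsiT Pistar Pimap Rg Ht w₀ hr hPistar hPimap hRg hT).choose

theorem fixT_spec (hr : 0 < r) {K₁ K₂ K₃ : NNReal} (hPistar : LipschitzWith K₁ Pistar)
    (hPimap : LipschitzWith K₂ Pimap) (hRg : LipschitzWith K₃ Rg) {T : ℝ} (hT : (0:ℝ) ≤ T) :
    PsiT r Pistar Pimap Rg Ht w₀ hr hPistar.continuous hPimap.continuous hRg.continuous hT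
      (fixT r Pistar Pimap Rg Ht w₀ hr hPistar hPimap hRg hT)
      = fixT r Pistar Pimap Rg Ht w₀ hr hPistar hPimap hRg hT :=
  (exists_fixedPoint_PsiT Pistar Pimap Rg Ht w₀ hr hPistar hPimap hRg hT).choose_spec.1

theorem fixT_unique (hr : 0 < r) {K₁ K₂ K₃ : NNReal} (hPistar : LipschitzWith K₁ Pistar)
    (hPimap : LipschitzWith K₂ Pimap) (hRg : LipschitzWith K₃ Rg) {T : ℝ} (hT : (0:ℝ) ≤ T)
    (f' : C(Icc (0:ℝ) T, EuclideanSpace ℝ (Fin n)))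
    (hf' : PsiT r Pistar Pimap Rg Ht w₀ hr hPistar.continuous hPimap.continuous
      hRg.continuous hT f' = f') :
    f' = fixT r Pistar Pimap Rg Ht w₀ hr hPistar hPimap hRg hT :=
  (exists_fixedPoint_PsiT Pistar Pimap Rg Ht w₀ hr hPistar hPimap hRg hT).choose_spec.2 f' hf'

/-- The fixed point equation, in pointwise form. -/
theorem fixT_eq (hr : 0 < r) {K₁ K₂ K₃ : NNReal} (hPistar : LipschitzWith K₁ Pistar)
    (hPimap : LipschitzWith K₂ Pimap) (hRg : LipschitzWith K₃ Rg) {T : ℝ} (hT : (0:ℝ) ≤ T)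
    (u : Icc (0:ℝ) T) :
    fixT r Pistar Pimap Rg Ht w₀ hr hPistar hPimap hRg hT u
      = Psi r Pistar Pimap Rg Ht w₀
          (IccExtend hT (fixT r Pistar Pimap Rg Ht w₀ hr hPistar hPimap hRg hT)) u := by
  conv_lhs => rw [← fixT_spec Pistar Pimap Rg Ht w₀ hr hPistar hPimap hRg hT]
  rfl

/-- Consistency of the fixed points for different horizons. -/
theorem fixT_mono (hr : 0 < r) {K₁ K₂ K₃ : NNReal} (hPistar : LipschitzWith K₁ Pistar)
    (hPimap : LipschitzWith K₂ Pimap) (hRg : LipschitzWith K₃ Rg) {T₁ T₂ : ℝ}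
    (h01 : (0:ℝ) ≤ T₁) (h12 : T₁ ≤ T₂) {u : ℝ} (hu : u ∈ Icc (0:ℝ) T₁) :
    fixT r Pistar Pimap Rg Ht w₀ hr hPistar hPimap hRg (le_trans h01 h12)
        ⟨u, ⟨hu.1, le_trans hu.2 h12⟩⟩
      = fixT r Pistar Pimap Rg Ht w₀ hr hPistar hPimap hRg h01 ⟨u, hu⟩ := by
  set x₂ := fixT r Pistar Pimap Rg Ht w₀ hr hPistar hPimap hRg (le_trans h01 h12) with hx₂
  set f : C(Icc (0:ℝ) T₁, EuclideanSpace ℝ (Fin n)) :=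
    ⟨fun v => x₂ ⟨v.1, ⟨v.2.1, le_trans v.2.2 h12⟩⟩,
      x₂.continuous.comp (Continuous.subtype_mk continuous_subtype_val _)⟩ with hf
  have hfix : PsiT r Pistar Pimap Rg Ht w₀ hr hPistar.continuous hPimap.continuous
      hRg.continuous h01 f = f := by
    refine ContinuousMap.ext fun v => ?_
    show Psi r Pistar Pimap Rg Ht w₀ (IccExtend h01 f) v = f v
    have he : EqOn (IccExtend h01 (⇑f)) (IccExtend (le_trans h01 h12) (⇑x₂)) (Icc 0 T₁) := by
      intro s hs
      rw [IccExtend_of_mem _ _ hs, IccExtend_of_mem _ _ ⟨hs.1, le_trans hs.2 h12⟩]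
      rfl
    rw [Psi_congr Pistar Pimap Rg Ht w₀ he v.2]
    have := (fixT_eq Pistar Pimap Rg Ht w₀ hr hPistar hPimap hRg (le_trans h01 h12)
      ⟨v.1, ⟨v.2.1, le_trans v.2.2 h12⟩⟩).symm
    exact this
  have := fixT_unique Pistar Pimap Rg Ht w₀ hr hPistar hPimap hRg h01 f hfix
  rw [← this]
  rfl

variable (r) in
/-- The global solution `w`. -/
def wsol (hr : 0 < r) {K₁ K₂ K₃ : NNReal} (hPistar : LipschitzWith K₁ Pistar)
    (hPimap : LipschitzWith K₂ Pimap) (hRg : LipschitzWith K₃ Rg) (t : ℝ) :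
    EuclideanSpace ℝ (Fin n) :=
  fixT r Pistar Pimap Rg Ht w₀ hr hPistar hPimap hRg
    (le_trans zero_le_one (le_max_left 1 t))
    ⟨max 0 t, ⟨le_max_left _ _, max_le_max zero_le_one (le_refl t)⟩⟩

theorem fixT_congr_T (hr : 0 < r) {K₁ K₂ K₃ : NNReal} (hPistar : LipschitzWith K₁ Pistar)
    (hPimap : LipschitzWith K₂ Pimap) (hRg : LipschitzWith K₃ Rg) {T T' : ℝ} (hE : T = T')
    (hT : (0:ℝ) ≤ T) (hT' : (0:ℝ) ≤ T') {u : ℝ} (hu : u ∈ Icc (0:ℝ) T)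
    (hu' : u ∈ Icc (0:ℝ) T') :
    fixT r Pistar Pimap Rg Ht w₀ hr hPistar hPimap hRg hT ⟨u, hu⟩
      = fixT r Pistar Pimap Rg Ht w₀ hr hPistar hPimap hRg hT' ⟨u, hu'⟩ := by
  subst hE; rfl

theorem wsol_eq (hr : 0 < r) {K₁ K₂ K₃ : NNReal} (hPistar : LipschitzWith K₁ Pistar)
    (hPimap : LipschitzWith K₂ Pimap) (hRg : LipschitzWith K₃ Rg) {T : ℝ} (hT1 : 1 ≤ T)
    {t : ℝ} (htT : t ≤ T) :
    wsol r Pistar Pimap Rg Ht w₀ hr hPistar hPimap hRg t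
      = IccExtend (le_trans zero_le_one hT1)
          (⇑(fixT r Pistar Pimap Rg Ht w₀ hr hPistar hPimap hRg
            (le_trans zero_le_one hT1))) t := by
  have h0T : (0:ℝ) ≤ T := le_trans zero_le_one hT1
  rcases le_or_gt t 0 with ht0 | ht0
  · have h1 : max (0:ℝ) t = 0 := max_eq_left ht0
    have h2 : max (1:ℝ) t = 1 := max_eq_left (le_trans ht0 zero_le_one)
    rw [wsol, IccExtend_of_le_left _ _ ht0]
    have e1 : fixT r Pistar Pimap Rg Ht w₀ hr hPistar hPimap hRg
        (le_trans zero_le_one (le_max_left 1 t))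
        ⟨max 0 t, ⟨le_max_left _ _, max_le_max zero_le_one (le_refl t)⟩⟩
        = fixT r Pistar Pimap Rg Ht w₀ hr hPistar hPimap hRg zero_le_one
        ⟨0, ⟨le_refl 0, zero_le_one⟩⟩ := by
      refine (fixT_congr_T Pistar Pimap Rg Ht w₀ hr hPistar hPimap hRg h2 _ zero_le_one _
        (by rw [h1]; exact ⟨le_refl 0, zero_le_one⟩)).trans ?_
      congr 1
      exact Subtype.ext h1
    rw [e1]
    exact (fixT_mono Pistar Pimap Rg Ht w₀ hr hPistar hPimap hRg zero_le_one hT1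
      (u := 0) ⟨le_refl 0, zero_le_one⟩).symm
  · have h1 : max (0:ℝ) t = t := max_eq_right ht0.le
    rw [wsol, IccExtend_of_mem _ _ ⟨ht0.le, htT⟩]
    have hmax : max (1:ℝ) t ≤ T := max_le hT1 htT
    have h0m : (0:ℝ) ≤ max 1 t := le_trans zero_le_one (le_max_left _ _)
    have hmem : t ∈ Icc (0:ℝ) (max 1 t) := ⟨ht0.le, le_max_right _ _⟩
    have e1 : fixT r Pistar Pimap Rg Ht w₀ hr hPistar hPimap hRg
        (le_trans zero_le_one (le_max_left 1 t))
        ⟨max 0 t, ⟨le_max_left _ _, max_le_max zero_le_one (le_refl t)⟩⟩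
        = fixT r Pistar Pimap Rg Ht w₀ hr hPistar hPimap hRg h0m ⟨t, hmem⟩ := by
      congr 1
      exact Subtype.ext h1
    rw [e1]
    exact (fixT_mono Pistar Pimap Rg Ht w₀ hr hPistar hPimap hRg h0m hmax hmem).symm


theorem wsol_continuous (hr : 0 < r) {K₁ K₂ K₃ : NNReal} (hPistar : LipschitzWith K₁ Pistar)
    (hPimap : LipschitzWith K₂ Pimap) (hRg : LipschitzWith K₃ Rg) :
    Continuous (wsol r Pistar Pimap Rg Ht w₀ hr hPistar hPimap hRg) := by
  rw [continuous_iff_continuousAt]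
  intro t₀
  set T : ℝ := max 1 t₀ + 1 with hT
  have hT1 : (1:ℝ) ≤ T := by
    have := le_max_left (1:ℝ) t₀; linarith
  have ht₀T : t₀ < T := by
    have := le_max_right (1:ℝ) t₀; linarith
  refine ContinuousAt.congr (f := IccExtend (le_trans zero_le_one hT1)
      (⇑(fixT r Pistar Pimap Rg Ht w₀ hr hPistar hPimap hRg (le_trans zero_le_one hT1)))) ?_ ?_
  · exact ((fixT r Pistar Pimap Rg Ht w₀ hr hPistar hPimap hRg
      (le_trans zero_le_one hT1)).continuous.Icc_extend').continuousAt
  · filter_upwards [Iio_mem_nhds ht₀T] with u hu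
    exact (wsol_eq Pistar Pimap Rg Ht w₀ hr hPistar hPimap hRg hT1 (le_of_lt hu)).symm

theorem wsol_integral (hr : 0 < r) {K₁ K₂ K₃ : NNReal} (hPistar : LipschitzWith K₁ Pistar)
    (hPimap : LipschitzWith K₂ Pimap) (hRg : LipschitzWith K₃ Rg) {t : ℝ} (ht : 0 ≤ t) :
    wsol r Pistar Pimap Rg Ht w₀ hr hPistar hPimap hRg t
      = Psi r Pistar Pimap Rg Ht w₀ (wsol r Pistar Pimap Rg Ht w₀ hr hPistar hPimap hRg) t := by
  set T : ℝ := max 1 t with hT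
  have hT1 : (1:ℝ) ≤ T := le_max_left _ _
  have h0T : (0:ℝ) ≤ T := le_trans zero_le_one hT1
  have htT : t ≤ T := le_max_right _ _
  have hmem : t ∈ Icc (0:ℝ) T := ⟨ht, htT⟩
  set x := fixT r Pistar Pimap Rg Ht w₀ hr hPistar hPimap hRg h0T with hx
  have h1 : wsol r Pistar Pimap Rg Ht w₀ hr hPistar hPimap hRg t = x ⟨t, hmem⟩ := by
    rw [wsol_eq Pistar Pimap Rg Ht w₀ hr hPistar hPimap hRg hT1 htT,
      IccExtend_of_mem _ _ hmem]
  have h2 := fixT_eq Pistar Pimap Rg Ht w₀ hr hPistar hPimap hRg h0T ⟨t, hmem⟩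
  have he : EqOn (IccExtend h0T (⇑x)) (wsol r Pistar Pimap Rg Ht w₀ hr hPistar hPimap hRg)
      (Icc 0 T) := by
    intro s hs
    rw [IccExtend_of_mem _ _ hs,
      wsol_eq Pistar Pimap Rg Ht w₀ hr hPistar hPimap hRg hT1 hs.2,
      IccExtend_of_mem _ _ hs]
  rw [h1, h2, Psi_congr Pistar Pimap Rg Ht w₀ he hmem]

theorem wsol_zero (hr : 0 < r) {K₁ K₂ K₃ : NNReal} (hPistar : LipschitzWith K₁ Pistar)
    (hPimap : LipschitzWith K₂ Pimap) (hRg : LipschitzWith K₃ Rg) :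
    wsol r Pistar Pimap Rg Ht w₀ hr hPistar hPimap hRg 0 = w₀ := by
  rw [wsol_integral Pistar Pimap Rg Ht w₀ hr hPistar hPimap hRg (le_refl 0), Psi]
  simp

theorem smul_combine {t : ℝ} (hr : 0 < r) (ht : 0 < t) (P z : EuclideanSpace ℝ (Fin n)) :
    z + (t / r) • ((r / t) • (P - z)) = P := by
  rw [smul_smul]
  have : t / r * (r / t) = 1 := by field_simp
  rw [this, one_smul]
  abel

theorem hasDerivAt_Az (hr : 0 < r) (hP : Continuous Pistar)
    {g : ℝ → EuclideanSpace ℝ (Fin n)} (hg : Continuous g) {t : ℝ} (ht : 0 < t) :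
    HasDerivAt (Az r Pistar g)
      ((r / t) • (Pistar (g t) - Az r Pistar g t)) t := by
  have hI := hasDerivAt_integral_kern Pistar hr hP hg ht
  have hc : HasDerivAt (fun u : ℝ => u ^ (-r)) (-r * t ^ (-r - 1)) t :=
    Real.hasDerivAt_rpow_const (x := t) (p := -r) (Or.inl ht.ne')
  have hprod := hc.smul hI
  have heq : Az r Pistar g =ᶠ[𝓝 t]
      fun u => (u ^ (-r)) • ∫ s in (0:ℝ)..u, kern r Pistar g s := by
    filter_upwards [Ioi_mem_nhds ht] with u hu
    rw [Az, if_pos (mem_Ioi.1 hu)]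
  refine HasDerivAt.congr_of_eventuallyEq (f := fun u =>
    (u ^ (-r)) • ∫ s in (0:ℝ)..u, kern r Pistar g s) ?_ heq
  convert hprod using 1
  · rfl
  set I := ∫ s in (0:ℝ)..t, kern r Pistar g s with hIdef
  have hAz : Az r Pistar g t = t ^ (-r) • I := by rw [Az, if_pos ht]
  have hinv : t ^ (-r) * t ^ (r - 1) = t⁻¹ := by
    rw [← Real.rpow_add ht, show -r + (r - 1) = -1 by ring, Real.rpow_neg_one]
  have hs1 : t ^ (-r) * (r * t ^ (r - 1)) = r / t := by
    rw [div_eq_mul_inv, ← hinv]; ring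
  have hs2 : r / t * t ^ (-r) = r * t ^ (-r - 1) := by
    rw [show -r - 1 = -r + -1 by ring, Real.rpow_add ht, Real.rpow_neg_one, div_eq_mul_inv]
    ring
  rw [hAz, kern, smul_sub, smul_smul, smul_smul, hs1, hs2, neg_mul, neg_smul,
    sub_eq_add_neg, add_comm]

end Aux7


/-- Theorem 1 of the paper. For `r > 0`, globally Lipschitz maps
`Π*, Π, R′` and a matrix `H̃`, with compatible initial data `z₀ = Π*(w₀)`, `w₀ = Π(z₀)`,
the singular accelerated primal-dual ODE has a solution on `[0,∞)`, unique in the sense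
that any two solutions coincide on `[0,∞)`. -/
theorem stmt_7 (n : ℕ) (r : ℝ) (hr : 0 < r)
    (Pistar Pimap Rg : EuclideanSpace ℝ (Fin n) → EuclideanSpace ℝ (Fin n))
    (K₁ K₂ K₃ : NNReal)
    (hPistar : LipschitzWith K₁ Pistar)
    (hPimap : LipschitzWith K₂ Pimap)
    (hRg : LipschitzWith K₃ Rg)
    (Ht : Matrix (Fin n) (Fin n) ℝ)
    (z₀ w₀ : EuclideanSpace ℝ (Fin n))
    (hz₀ : z₀ = Pistar w₀) (hw₀ : w₀ = Pimap z₀) :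
    ∃ z w zd wd : ℝ → EuclideanSpace ℝ (Fin n),
      IsSingularPDSolution n r Pistar Pimap Rg Ht z₀ w₀ z w zd wd ∧
      ∀ z₂ w₂ zd₂ wd₂ : ℝ → EuclideanSpace ℝ (Fin n),
        IsSingularPDSolution n r Pistar Pimap Rg Ht z₀ w₀ z₂ w₂ zd₂ wd₂ →
        ∀ t ≥ (0 : ℝ), z₂ t = z t ∧ w₂ t = w t := by
  have hPc : Continuous Pistar := hPistar.continuous
  have hPmc : Continuous Pimap := hPimap.continuous
  have hRc : Continuous Rg := hRg.continuous
  set w : ℝ → EuclideanSpace ℝ (Fin n) :=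
    wsol r Pistar Pimap Rg Ht w₀ hr hPistar hPimap hRg with hwdef
  have hwc : Continuous w := wsol_continuous Pistar Pimap Rg Ht w₀ hr hPistar hPimap hRg
  have hw0 : w 0 = w₀ := wsol_zero Pistar Pimap Rg Ht w₀ hr hPistar hPimap hRg
  have hrp : Continuous fun s : ℝ => s ^ r :=
    continuous_iff_continuousAt.2 fun x => Real.continuousAt_rpow_const x r (Or.inr hr.le)
  refine ⟨Az r Pistar w, w, fun t => (r/t) • (Pistar (w t) - Az r Pistar w t),
    Vec r Pistar Pimap Rg Ht w, ⟨(Az_cont Pistar hr hPc hwc).continuousOn,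
      hwc.continuousOn, ?_, hw0, ?_⟩, ?_⟩
  · -- z 0 = z₀
    rw [Az, if_neg (lt_irrefl 0), hw0, ← hz₀]
  · -- the ODE at t > 0
    intro t ht
    have hzd : HasDerivAt (Az r Pistar w) ((r/t) • (Pistar (w t) - Az r Pistar w t)) t :=
      hasDerivAt_Az Pistar hr hPc hwc ht
    have hwd : HasDerivAt w (Vec r Pistar Pimap Rg Ht w t) t := by
      refine HasDerivAt.congr_of_eventuallyEq (f := Psi r Pistar Pimap Rg Ht w₀ w)
        (hasDerivAt_Psi Pistar Pimap Rg Ht w₀ hr hPc hPmc hRc hwc t) ?_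
      filter_upwards [Ioi_mem_nhds ht] with u hu
      exact wsol_integral Pistar Pimap Rg Ht w₀ hr hPistar hPimap hRg (le_of_lt hu)
    refine ⟨hzd, hwd, rfl, ?_⟩
    have hkey : Az r Pistar w t + (t/r) • ((r/t) • (Pistar (w t) - Az r Pistar w t))
        = Pistar (w t) := smul_combine hr ht _ _
    rw [hkey]
    rfl
  · -- uniqueness
    intro z₂ w₂ zd₂ wd₂ hsol
    obtain ⟨hz₂c, hw₂c, hz₂0, hw₂0, hode⟩ := hsol
    -- Step A : z₂ = Az w₂ on [0,∞)
    have hA : ∀ t, 0 ≤ t → z₂ t = Az r Pistar w₂ t := by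
      intro t ht
      rcases eq_or_lt_of_le ht with h | h
      · rw [Az, if_neg (by rw [← h]; exact lt_irrefl 0), ← h, hz₂0, hw₂0, hz₀]
      · have hφc : ContinuousOn (fun s : ℝ => (s ^ r) • z₂ s) (Icc 0 t) :=
          (hrp.continuousOn).smul (hz₂c.mono (fun x hx => hx.1))
        have hderiv : ∀ s ∈ Ioo (0:ℝ) t,
            HasDerivWithinAt (fun s : ℝ => (s ^ r) • z₂ s) (kern r Pistar w₂ s) (Ioi s) s := by
          intro s hs
          obtain ⟨hdz, _, hzds, _⟩ := hode s hs.1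
          have hds : HasDerivAt (fun s : ℝ => (s ^ r) • z₂ s)
              ((s ^ r) • zd₂ s + (r * s ^ (r-1)) • z₂ s) s :=
            (Real.hasDerivAt_rpow_const (x := s) (p := r) (Or.inl hs.1.ne')).smul hdz
          have hs3 : s ^ r * (r / s) = r * s ^ (r - 1) := by
            rw [show r - 1 = r + -1 by ring, Real.rpow_add hs.1, Real.rpow_neg_one,
              div_eq_mul_inv]
            ring
          have : (s ^ r) • zd₂ s + (r * s ^ (r-1)) • z₂ s = kern r Pistar w₂ s := by
            rw [hzds, smul_smul, hs3, kern, smul_sub]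
            abel
          rw [← this]
          exact hds.hasDerivWithinAt
        have hint : IntervalIntegrable (kern r Pistar w₂) MeasureTheory.volume 0 t :=
          integrable_kernel Pistar hr
            (hPc.comp_continuousOn (hw₂c.mono (fun x hx => hx.1))) ht
        have hFTC := intervalIntegral.integral_eq_sub_of_hasDeriv_right_of_le ht hφc
          hderiv hint
        have hφ0 : ((0:ℝ) ^ r) • z₂ 0 = 0 := by
          rw [Real.zero_rpow hr.ne', zero_smul]
        rw [hφ0, sub_zero] at hFTC
        rw [Az, if_pos h, hFTC, smul_smul, rpow_cancel h, one_smul]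
    -- Step B : the integral equation for w₂
    have hB : ∀ t, 0 ≤ t → w₂ t = Psi r Pistar Pimap Rg Ht w₀ w₂ t := by
      intro t ht
      have hVecOn : ∀ u, 0 ≤ u →
          EqOn (Vec r Pistar Pimap Rg Ht w₂)
            (fun s => (s / r) • Fop Pistar Pimap Rg Ht (z₂ s) (w₂ s)) (Icc 0 u) := by
        intro u hu s hs
        rw [Vec, ← hA s hs.1]
      have hVc : ContinuousOn (Vec r Pistar Pimap Rg Ht w₂) (Icc 0 t) := by
        refine ContinuousOn.congr ?_ (hVecOn t ht)
        have hHl : Continuous fun x : EuclideanSpace ℝ (Fin n) =>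
            (Matrix.toEuclideanLin Ht) x := LinearMap.continuous_of_finiteDimensional _
        refine ContinuousOn.smul ((continuous_id.div_const r).continuousOn) ?_
        have hz' := hz₂c.mono (fun x (hx : x ∈ Icc (0:ℝ) t) => hx.1)
        have hw' := hw₂c.mono (fun x (hx : x ∈ Icc (0:ℝ) t) => hx.1)
        exact (((hRc.comp_continuousOn hz').neg.sub
          (hHl.comp_continuousOn (hPc.comp_continuousOn hw'))).add
          (hPmc.comp_continuousOn (hPc.comp_continuousOn hw'))).sub hw'
      have hint : IntervalIntegrable (Vec r Pistar Pimap Rg Ht w₂)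
          MeasureTheory.volume 0 t := by
        refine ContinuousOn.intervalIntegrable ?_
        rwa [uIcc_of_le ht]
      have hderiv : ∀ s ∈ Ioo (0:ℝ) t, HasDerivWithinAt w₂
          (Vec r Pistar Pimap Rg Ht w₂ s) (Ioi s) s := by
        intro s hs
        obtain ⟨_, hdw, hzds, hwds⟩ := hode s hs.1
        have hkey : z₂ s + (s/r) • zd₂ s = Pistar (w₂ s) := by
          rw [hzds]; exact smul_combine hr hs.1 _ _
        have : wd₂ s = Vec r Pistar Pimap Rg Ht w₂ s := by
          rw [hwds, hkey, Vec, ← hA s hs.1.le]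
          rfl
        rw [← this]
        exact hdw.hasDerivWithinAt
      have hFTC := intervalIntegral.integral_eq_sub_of_hasDeriv_right_of_le ht
        (hw₂c.mono (fun x (hx : x ∈ Icc (0:ℝ) t) => hx.1)) hderiv hint
      rw [Psi, hFTC, hw₂0]
      abel
    -- Step C : w₂ = w on [0,∞)
    have hC : ∀ t, 0 ≤ t → w₂ t = w t := by
      intro t ht
      set T : ℝ := max 1 t with hT
      have hT1 : (1:ℝ) ≤ T := le_max_left _ _
      have h0T : (0:ℝ) ≤ T := le_trans zero_le_one hT1
      have htT : t ≤ T := le_max_right _ _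
      set f₂ : C(Icc (0:ℝ) T, EuclideanSpace ℝ (Fin n)) :=
        ⟨fun u => w₂ u.1, (hw₂c.mono (fun x (hx : x ∈ Icc (0:ℝ) T) => hx.1)).restrict⟩
        with hf₂
      have hfix : PsiT r Pistar Pimap Rg Ht w₀ hr hPc hPmc hRc h0T f₂ = f₂ := by
        refine ContinuousMap.ext fun u => ?_
        show Psi r Pistar Pimap Rg Ht w₀ (IccExtend h0T f₂) u = f₂ u
        have he : EqOn (IccExtend h0T (⇑f₂)) w₂ (Icc 0 T) := by
          intro s hs
          rw [IccExtend_of_mem _ _ hs]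
          rfl
        rw [Psi_congr Pistar Pimap Rg Ht w₀ he u.2]
        exact (hB u.1 u.2.1).symm
      have huniq := fixT_unique Pistar Pimap Rg Ht w₀ hr hPistar hPimap hRg h0T f₂ hfix
      have h1 : w₂ t = f₂ ⟨t, ⟨ht, htT⟩⟩ := rfl
      rw [h1, huniq]
      rw [hwdef, wsol_eq Pistar Pimap Rg Ht w₀ hr hPistar hPimap hRg hT1 htT,
        IccExtend_of_mem _ _ ⟨ht, htT⟩]
    intro t ht
    refine ⟨?_, hC t ht⟩
    rw [hA t ht]
    exact Az_congr Pistar (fun s hs => hC s hs.1) ⟨ht, le_refl t⟩
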